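/- Let f be a pdf supported on [−1/4,1/4], and let j be a nonzero integer. Setting M := ‖f∗f‖_∞ (the essential supremum of f∗f, which is at least 1), one has |f̂(j)|² ≤ (M/π)·sin(π/M). -/

import Mathlib

open MeasureTheory

/-- The normalized Haar (probability) measure on the unit circle `ℝ/ℤ`. -/
noncomputable def haarT : Measure UnitAddCircle := AddCircle.haarAddCircle

/-- The image of `[−1/4, 1/4]` in `𝕋 = ℝ/ℤ`. -/
def QuarterArc : Set UnitAddCircle :=
  (fun x : ℝ => (x : UnitAddCircle)) '' Set.Icc (-(1/4) : ℝ) (1/4)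

/-- `f` is a pdf supported on `[−1/4,1/4]`: a nonnegative function in `L²(𝕋)` with integral 1
which vanishes a.e. outside the image of `[−1/4,1/4]` in `𝕋`. -/
structure IsPdfQuarter (f : UnitAddCircle → ℝ) : Prop where
  memL2 : MemLp f 2 haarT
  nonneg : ∀ x, 0 ≤ f x
  integral_one : ∫ x, f x ∂haarT = 1
  support : ∀ᵐ x ∂haarT, x ∉ QuarterArc → f x = 0

/-- Convolution on `𝕋` with respect to the Haar probability measure. -/
noncomputable def convT (f g : UnitAddCircle → ℝ) (c : UnitAddCircle) : ℝ :=
  ∫ x, f x * g (c - x) ∂haarT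

section Aux

open Set Function Real Filter

instance : IsProbabilityMeasure haarT := by unfold haarT; infer_instance
instance : haarT.IsAddRightInvariant := by unfold haarT; infer_instance
instance : haarT.IsAddLeftInvariant := by unfold haarT; infer_instance
instance : haarT.IsNegInvariant := by unfold haarT; infer_instance

private lemma contG (c₀ : ℝ) : Continuous (fun v : ℝ => max (Real.cos (2*π*v) - c₀) 0) := by
  exact ((Real.continuous_cos.comp (by continuity)).sub continuous_const).max continuous_const

private lemma perG (c₀ : ℝ) : Periodic (fun v : ℝ => max (Real.cos (2*π*v) - c₀) 0) 1 := by
  intro v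
  simp only [mul_add, mul_one]
  rw [Real.cos_add_two_pi]

private lemma helper1 (M : ℝ) (hM : 1 ≤ M) (j : ℤ) (hj : j ≠ 0) (a t : ℝ) :
    ∫ x in t..t+1, max (Real.cos (2*π*(j*x) + a) - Real.cos (π/M)) 0
      = Real.sin (π/M)/π - Real.cos (π/M)/M := by
  have hMpos : (0:ℝ) < M := lt_of_lt_of_le one_pos hM
  set c₀ := Real.cos (π/M) with hc₀
  set G : ℝ → ℝ := fun v => max (Real.cos (2*π*v) - c₀) 0 with hG
  have hGc : Continuous G := contG c₀
  have hGp : Periodic G 1 := perG c₀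
  have h_int : ∀ t₁ t₂ : ℝ, IntervalIntegrable G volume t₁ t₂ := fun t₁ t₂ =>
    hGc.intervalIntegrable t₁ t₂
  set β : ℝ := 1/(2*M) with hβ
  have hβpos : 0 < β := by positivity
  have hβle : β ≤ 1/2 := by
    rw [hβ]
    rw [div_le_div_iff₀ (by positivity) (by norm_num)]
    linarith
  have h2πβ : 2*π*β = π/M := by
    field_simp [hβ]
    rw [hβ]; field_simp
  -- rewrite integrand as G ∘ (j * x + a/(2π))
  have harg : ∀ x:ℝ, 2*π*((j:ℝ)*x + a/(2*π)) = 2*π*((j:ℝ)*x) + a := by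
    intro x
    field_simp
  have hfun : (fun x : ℝ => max (Real.cos (2*π*(j*x) + a) - c₀) 0)
      = fun x : ℝ => G ((j:ℝ)*x + a/(2*π)) := by
    funext x
    simp only [hG, harg]
  rw [hfun]
  -- step 1: reduce to a single period of G
  have hjne : (j:ℝ) ≠ 0 := Int.cast_ne_zero.mpr hj
  set b := a/(2*π) with hb
  have key : (j:ℝ) • ∫ x in t..t+1, G ((j:ℝ)*x + b)
      = ∫ x in ((j:ℝ)*t+b)..((j:ℝ)*(t+1)+b), G x :=
    intervalIntegral.smul_integral_comp_mul_add G (j:ℝ) b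
  have hper : ∫ x in ((j:ℝ)*t+b)..((j:ℝ)*(t+1)+b), G x
      = (j:ℤ) • ∫ x in ((j:ℝ)*t+b)..((j:ℝ)*t+b)+1, G x := by
    have := hGp.intervalIntegral_add_zsmul_eq j ((j:ℝ)*t+b) h_int
    rw [← this]
    congr 1
    rw [zsmul_eq_mul, mul_one]
    ring
  have honeper : ∫ x in t..t+1, G ((j:ℝ)*x + b) = ∫ x in ((j:ℝ)*t+b)..((j:ℝ)*t+b)+1, G x := by
    have h2 : (j:ℝ) * ∫ x in t..t+1, G ((j:ℝ)*x + b)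
        = (j:ℝ) * ∫ x in ((j:ℝ)*t+b)..((j:ℝ)*t+b)+1, G x := by
      have := key.trans hper
      simpa [zsmul_eq_mul, smul_eq_mul] using this
    exact mul_left_cancel₀ hjne h2
  rw [honeper, hGp.intervalIntegral_add_eq ((j:ℝ)*t+b) (-β)]
  -- split the period [-β, 1-β]
  have hsplit : (∫ x in (-β)..β, G x) + ∫ x in β..(-β+1), G x = ∫ x in (-β)..(-β+1), G x :=
    intervalIntegral.integral_add_adjacent_intervals (h_int _ _) (h_int _ _)
  rw [← hsplit]
  -- middle piece vanishes
  have hmid : ∫ x in β..(-β+1), G x = 0 := by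
    rw [← intervalIntegral.integral_zero (a := β) (b := -β+1)]
    apply intervalIntegral.integral_congr
    intro v hv
    rw [Set.uIcc_of_le (by linarith)] at hv
    obtain ⟨hv1, hv2⟩ := hv
    have hcosle : Real.cos (2*π*v) ≤ c₀ := by
      rcases le_or_gt v (1/2) with hv3 | hv3
      · rw [hc₀]
        apply Real.cos_le_cos_of_nonneg_of_le_pi
        · positivity
        · nlinarith [Real.pi_pos]
        · nlinarith [Real.pi_pos]
      · have : Real.cos (2*π*v) = Real.cos (2*π - 2*π*v) := (Real.cos_two_pi_sub _).symm
        rw [this, hc₀]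
        apply Real.cos_le_cos_of_nonneg_of_le_pi
        · positivity
        · nlinarith [Real.pi_pos]
        · nlinarith [Real.pi_pos]
    simp only [hG]
    simp [max_eq_right (by linarith : Real.cos (2*π*v) - c₀ ≤ 0)]
  rw [hmid, add_zero]
  -- main piece
  have hmain : ∫ x in (-β)..β, G x = ∫ x in (-β)..β, (Real.cos (2*π*x) - c₀) := by
    apply intervalIntegral.integral_congr
    intro v hv
    rw [Set.uIcc_of_le (by linarith)] at hv
    obtain ⟨hv1, hv2⟩ := hv
    have hge : c₀ ≤ Real.cos (2*π*v) := by
      have habs : Real.cos (2*π*v) = Real.cos |2*π*v| := (Real.cos_abs _).symm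
      rw [habs, hc₀]
      apply Real.cos_le_cos_of_nonneg_of_le_pi
      · exact abs_nonneg _
      · rw [div_le_iff₀ hMpos] at *
        nlinarith [Real.pi_pos]
      · rw [abs_le]
        constructor <;> nlinarith [Real.pi_pos]
    simp only [hG]
    exact max_eq_left (by linarith)
  rw [hmain]
  have hπ : (0:ℝ) < π := Real.pi_pos
  have hint1 : IntervalIntegrable (fun x : ℝ => Real.cos (2*π*x)) volume (-β) β :=
    (Real.continuous_cos.comp (continuous_const.mul continuous_id)).intervalIntegrable _ _
  have hcosint : ∫ x in (-β)..β, Real.cos (2*π*x) = Real.sin (π/M)/π := by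
    have hkey := intervalIntegral.mul_integral_comp_mul_left (f := Real.cos) (c := 2*π)
      (a := -β) (b := β)
    rw [integral_cos, mul_neg, h2πβ, Real.sin_neg] at hkey
    have h2 : (2*π) * ∫ x in (-β)..β, Real.cos (2*π*x) = 2 * Real.sin (π/M) := by
      rw [hkey]; ring
    rw [eq_div_iff hπ.ne']
    linarith
  rw [intervalIntegral.integral_sub hint1 intervalIntegrable_const, hcosint,
    intervalIntegral.integral_const, smul_eq_mul]
  have h3 : (β - -β) * c₀ = c₀ / M := by
    rw [hβ]
    field_simp
    ring
  rw [h3]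

private lemma fourier_norm_one (n : ℤ) (x : UnitAddCircle) : ‖fourier n x‖ = 1 := by
  rw [fourier_apply]; exact Circle.norm_coe _

private lemma fourier_pt_add (n : ℤ) (x y : UnitAddCircle) :
    fourier n (x + y) = fourier n x * fourier n y := by
  simp only [fourier_apply, smul_add]
  rw [AddCircle.toCircle_add, Circle.coe_mul]

private lemma haarT_eq_volume : (volume : Measure UnitAddCircle) = haarT := by
  rw [AddCircle.volume_eq_smul_haarAddCircle]
  simp [haarT]

private lemma bathtub (M : ℝ) (hM : 1 ≤ M) (j : ℤ) (hj : j ≠ 0) (g : UnitAddCircle → ℝ)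
    (hgi : Integrable g haarT) (hg0 : ∀ᵐ c ∂haarT, 0 ≤ g c)
    (hgM : ∀ᵐ c ∂haarT, g c ≤ M) (hg1 : ∫ c, g c ∂haarT = 1) :
    ‖fourierCoeff (fun c => (g c : ℂ)) j‖ ≤ M / π * Real.sin (π / M) := by
  have hMpos : (0:ℝ) < M := lt_of_lt_of_le one_pos hM
  have hπ : (0:ℝ) < π := Real.pi_pos
  set w := fourierCoeff (fun c => (g c : ℂ)) j with hwdef
  set φ : ℝ := -w.arg with hφ
  set u : ℂ := Complex.exp (φ * Complex.I) with hu
  have hu1 : ‖u‖ = 1 := Complex.norm_exp_ofReal_mul_I φ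
  have huw : u * w = (‖w‖ : ℂ) := by
    nth_rewrite 1 [← Complex.norm_mul_exp_arg_mul_I w]
    rw [hu, mul_comm u, mul_assoc, ← Complex.exp_add]
    have : (w.arg : ℂ) * Complex.I + (φ:ℂ) * Complex.I = 0 := by
      rw [hφ]; push_cast; ring
    rw [this, Complex.exp_zero, mul_one]
  have hw : w = ∫ c, fourier (-j) c • (g c : ℂ) ∂haarT := rfl
  set h : UnitAddCircle → ℝ := fun c => (u * fourier (-j) c).re with hh
  have hhcont : Continuous h := Complex.continuous_re.comp
    (continuous_const.mul (fourier (-j)).continuous)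
  have hhbd : ∀ c, |h c| ≤ 1 := by
    intro c
    calc |h c| ≤ ‖u * fourier (-j) c‖ := Complex.abs_re_le_norm _
    _ = 1 := by rw [norm_mul, hu1, fourier_norm_one, one_mul]
  have hgiC : Integrable (fun c => (g c : ℂ)) haarT := hgi.ofReal
  have hInt1 : Integrable (fun c => (u * fourier (-j) c) * (g c : ℂ)) haarT := by
    apply Integrable.bdd_mul hgiC
    · exact (continuous_const.mul (fourier (-j)).continuous).aestronglyMeasurable
    · exact Filter.Eventually.of_forall fun c => by
        rw [norm_mul, hu1, fourier_norm_one, one_mul]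
  have habs : ‖w‖ = ∫ c, h c * g c ∂haarT := by
    have h1 : (‖w‖ : ℂ) = ∫ c, (u * fourier (-j) c) * (g c : ℂ) ∂haarT := by
      rw [← huw, hw, ← integral_const_mul]
      congr 1
      funext c
      rw [smul_eq_mul]
      ring
    have h2 : ∫ c, ((u * fourier (-j) c) * (g c : ℂ)).re ∂haarT
        = ((∫ c, (u * fourier (-j) c) * (g c : ℂ) ∂haarT) : ℂ).re := integral_re hInt1
    rw [← h1] at h2
    simp only [Complex.ofReal_re] at h2
    rw [← h2]
    congr 1
    funext c
    simp [hh, Complex.mul_re, Complex.ofReal_re, Complex.ofReal_im]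
  set c₀ : ℝ := Real.cos (π/M) with hc₀
  -- pointwise bathtub inequality
  have hptw : ∀ᵐ c ∂haarT, h c * g c ≤ c₀ * g c + M * max (h c - c₀) 0 := by
    filter_upwards [hg0, hgM] with c h0 hMc
    rcases le_or_gt (h c) c₀ with hcase | hcase
    · have h1 : (0:ℝ) ≤ max (h c - c₀) 0 := le_max_right _ _
      nlinarith
    · rw [max_eq_left (by linarith)]
      nlinarith
  -- integrability of both sides
  have hIntlhs : Integrable (fun c => h c * g c) haarT := by
    apply Integrable.bdd_mul hgi hhcont.aestronglyMeasurable
    exact Filter.Eventually.of_forall fun c => by rw [Real.norm_eq_abs]; exact hhbd c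
  have hmaxcont : Continuous (fun c => max (h c - c₀) 0) :=
    (hhcont.sub continuous_const).max continuous_const
  have hmaxint : Integrable (fun c => max (h c - c₀) 0) haarT := by
    have : MemLp (fun c => max (h c - c₀) 0) ⊤ haarT := by
      apply memLp_top_of_bound hmaxcont.aestronglyMeasurable (1 + |c₀|)
      refine Filter.Eventually.of_forall fun c => ?_
      rw [Real.norm_eq_abs, abs_le]
      constructor
      · have := le_max_right (h c - c₀) 0
        have := abs_nonneg c₀
        linarith
      · rcases max_cases (h c - c₀) 0 with ⟨he, _⟩ | ⟨he, _⟩ <;> rw [he]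
        · have := abs_le.mp (hhbd c)
          have := neg_abs_le c₀
          linarith [this]
        · positivity
    exact this.integrable le_top
  set A := ∫ c, max (h c - c₀) 0 ∂haarT with hA
  have hbound : ‖w‖ ≤ c₀ + M * A := by
    rw [habs]
    calc ∫ c, h c * g c ∂haarT ≤ ∫ c, (c₀ * g c + M * max (h c - c₀) 0) ∂haarT :=
      integral_mono_ae hIntlhs ((hgi.const_mul c₀).add (hmaxint.const_mul M)) hptw
    _ = c₀ * (∫ c, g c ∂haarT) + M * A := by
      rw [integral_add (hgi.const_mul c₀) (hmaxint.const_mul M),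
        integral_const_mul, integral_const_mul]
    _ = c₀ + M * A := by rw [hg1, mul_one]
  -- compute A via the helper
  have hhx : ∀ x : ℝ, h ((x : ℝ) : UnitAddCircle) = Real.cos (2*π*((j:ℝ)*x) + (-φ)) := by
    intro x
    have h1 : u * fourier (-j) ((x : ℝ) : UnitAddCircle)
        = Complex.exp ((↑(φ - 2*π*((j:ℝ)*x)) : ℂ) * Complex.I) := by
      rw [hu, fourier_coe_apply, ← Complex.exp_add]
      congr 1
      push_cast
      ring
    rw [hh]
    simp only [h1, Complex.exp_ofReal_mul_I_re]
    rw [show φ - 2*π*((j:ℝ)*x) = -(2*π*((j:ℝ)*x) + -φ) by ring, Real.cos_neg]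
  have hAval : A = Real.sin (π/M)/π - Real.cos (π/M)/M := by
    have hpre := UnitAddCircle.integral_preimage 0 (fun c => max (h c - c₀) 0)
    rw [haarT_eq_volume] at hpre
    rw [hA, ← hpre]
    have : (∫ x in Set.Ioc (0:ℝ) (0+1), max (h ((x:ℝ) : UnitAddCircle) - c₀) 0)
        = ∫ x in (0:ℝ)..(0+1), max (Real.cos (2*π*((j:ℝ)*x) + (-φ)) - Real.cos (π/M)) 0 := by
      rw [intervalIntegral.integral_of_le (by norm_num : (0:ℝ) ≤ 0+1)]
      apply setIntegral_congr_fun measurableSet_Ioc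
      intro x _
      simp only
      rw [hhx x]
    rw [this]
    exact helper1 M hM j hj (-φ) 0
  have hfinal : c₀ + M * A = M / π * Real.sin (π / M) := by
    rw [hAval, hc₀]
    field_simp
    ring
  rw [← hfinal]
  exact hbound

private lemma fourierCoeff_convT (f : UnitAddCircle → ℝ) (hfi : Integrable f haarT) (j : ℤ) :
    fourierCoeff (fun c => (convT f f c : ℂ)) j = (fourierCoeff (fun x => (f x : ℂ)) j)^2 := by
  set K := fourierCoeff (fun x => (f x : ℂ)) j with hK
  have hprod : Integrable (fun p : UnitAddCircle × UnitAddCircle => f p.2 * f (p.1 - p.2))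
      (haarT.prod haarT) := by
    have := hfi.convolution_integrand (ContinuousLinearMap.mul ℝ ℝ) hfi
    simpa using this
  have hΦ : Integrable (fun p : UnitAddCircle × UnitAddCircle =>
      fourier (-j) p.1 * ((f p.2 * f (p.1 - p.2) : ℝ) : ℂ)) (haarT.prod haarT) := by
    apply Integrable.bdd_mul hprod.ofReal
    · exact ((fourier (-j)).continuous.comp continuous_fst).aestronglyMeasurable
    · exact Filter.Eventually.of_forall fun p => by
        rw [fourier_norm_one]
  have lhs_eq : fourierCoeff (fun c => (convT f f c : ℂ)) j
      = ∫ c, ∫ x, fourier (-j) c * ((f x * f (c - x) : ℝ) : ℂ) ∂haarT ∂haarT := by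
    rw [show fourierCoeff (fun c => (convT f f c : ℂ)) j
      = ∫ c, fourier (-j) c • ((convT f f c : ℝ) : ℂ) ∂haarT from rfl]
    congr 1
    funext c
    rw [smul_eq_mul]
    have hcast : ((convT f f c : ℝ) : ℂ) = ∫ x, ((f x * f (c - x) : ℝ) : ℂ) ∂haarT :=
      integral_ofReal.symm
    rw [hcast, ← integral_const_mul]
  have swap := integral_integral_swap (f := fun c x =>
    fourier (-j) c * ((f x * f (c - x) : ℝ) : ℂ)) (μ := haarT) (ν := haarT) hΦ
  rw [lhs_eq, swap]
  have inner_eq : ∀ x : UnitAddCircle,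
      (∫ c, fourier (-j) c * ((f x * f (c - x) : ℝ) : ℂ) ∂haarT)
        = (f x : ℂ) * (fourier (-j) x * K) := by
    intro x
    have e1 : (fun c => fourier (-j) c * ((f x * f (c - x) : ℝ) : ℂ))
        = fun c => (f x : ℂ) * (fourier (-j) c * ((f (c - x) : ℝ) : ℂ)) := by
      funext c; push_cast; ring
    rw [e1, integral_const_mul]
    congr 1
    have e2 : ∫ c, fourier (-j) c * ((f (c - x) : ℝ) : ℂ) ∂haarT
        = ∫ c, fourier (-j) (c + x) * ((f (c + x - x) : ℝ) : ℂ) ∂haarT :=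
      (integral_add_right_eq_self (fun c => fourier (-j) c * ((f (c - x) : ℝ) : ℂ)) x).symm
    rw [e2]
    have e3 : (fun c => fourier (-j) (c + x) * ((f (c + x - x) : ℝ) : ℂ))
        = fun c => fourier (-j) x * (fourier (-j) c * ((f c : ℝ) : ℂ)) := by
      funext c
      rw [add_sub_cancel_right, fourier_pt_add]
      ring
    rw [e3, integral_const_mul]
    rfl
  have e4 : (fun x => ∫ c, fourier (-j) c * ((f x * f (c - x) : ℝ) : ℂ) ∂haarT)
      = fun x => (fourier (-j) x * (f x : ℂ)) * K := by
    funext x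
    rw [inner_eq x]
    ring
  rw [e4, integral_mul_const]
  have e5 : ∫ x, fourier (-j) x * ((f x : ℝ) : ℂ) ∂haarT = K := rfl
  rw [e5, sq]

end Aux

theorem fourierCoeff_sq_bound (f : UnitAddCircle → ℝ) (hf : IsPdfQuarter f)
    (j : ℤ) (hj : j ≠ 0) (M : ℝ) (hM : M = (eLpNorm (convT f f) ⊤ haarT).toReal) :
    1 ≤ M ∧
    ‖fourierCoeff (fun x => (f x : ℂ)) j‖ ^ 2 ≤
      M / Real.pi * Real.sin (Real.pi / M) := by
  have hfi : Integrable f haarT := hf.memL2.integrable (by norm_num)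
  set g := convT f f with hg
  have hgint : Integrable g haarT := by
    have := hfi.integrable_convolution (ContinuousLinearMap.mul ℝ ℝ) hfi
    exact this
  have hg0 : ∀ c, 0 ≤ g c := fun c =>
    integral_nonneg fun x => mul_nonneg (hf.nonneg x) (hf.nonneg _)
  have hg1 : ∫ c, g c ∂haarT = 1 := by
    have := integral_convolution (ContinuousLinearMap.mul ℝ ℝ) hfi hfi
    rw [show ∫ c, g c ∂haarT
      = ∫ c, MeasureTheory.convolution f f (ContinuousLinearMap.mul ℝ ℝ) haarT c ∂haarT from rfl,
      this, ContinuousLinearMap.mul_apply', hf.integral_one, one_mul]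
  have hf2 : Integrable (fun x => f x ^ 2) haarT := hf.memL2.integrable_sq
  set B : ℝ := ∫ x, f x ^ 2 ∂haarT with hB
  have hB0 : 0 ≤ B := integral_nonneg fun x => sq_nonneg _
  -- pointwise bound on the convolution
  have hgB : ∀ c, g c ≤ B := by
    intro c
    have mp : MeasurePreserving (fun x : UnitAddCircle => c - x) haarT haarT := by
      have h1 := (measurePreserving_add_left haarT c).comp (Measure.measurePreserving_neg haarT)
      simpa [Function.comp_def, sub_eq_add_neg] using h1
    have htr : Integrable (fun x => f (c - x) ^ 2) haarT := by
      have := (mp.integrable_comp hf2.aestronglyMeasurable).mpr hf2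
      exact this
    have hgc : g c = ∫ x, f x * f (c - x) ∂haarT := rfl
    by_cases hint : Integrable (fun x => f x * f (c - x)) haarT
    · rw [hgc]
      calc ∫ x, f x * f (c - x) ∂haarT
          ≤ ∫ x, (f x ^ 2 + f (c - x) ^ 2) / 2 ∂haarT := by
            apply integral_mono hint ((hf2.add htr).div_const 2)
            intro x
            show f x * f (c - x) ≤ (f x ^ 2 + f (c - x) ^ 2) / 2
            nlinarith [sq_nonneg (f x - f (c - x))]
        _ = B := by
            rw [integral_div, integral_add hf2 htr,
              integral_sub_left_eq_self (fun y => f y ^ 2) haarT c]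
            rw [hB]
            ring
    · rw [hgc, integral_undef hint]
      exact hB0
  have hbdae : ∀ᵐ c ∂haarT, ‖g c‖ ≤ B :=
    Filter.Eventually.of_forall fun c => by
      rw [Real.norm_eq_abs, abs_of_nonneg (hg0 c)]; exact hgB c
  have hfin : eLpNorm g ⊤ haarT ≠ ⊤ := by
    refine ne_top_of_le_ne_top ?_ (eLpNorm_le_of_ae_bound hbdae)
    simp [ENNReal.ofReal_ne_top]
  have hgM : ∀ᵐ c ∂haarT, g c ≤ M := by
    filter_upwards [ae_le_eLpNormEssSup (f := g) (μ := haarT)] with c hc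
    have h1 : ((‖g c‖₊ : ENNReal)).toReal ≤ (eLpNormEssSup g haarT).toReal := by
      apply ENNReal.toReal_mono _ hc
      rw [← eLpNorm_exponent_top]
      exact hfin
    rw [ENNReal.coe_toReal, coe_nnnorm, Real.norm_eq_abs] at h1
    have h2 : (eLpNormEssSup g haarT).toReal = M := by
      rw [hM, eLpNorm_exponent_top]
    calc g c ≤ |g c| := le_abs_self _
    _ ≤ M := h2 ▸ h1
  have hM1 : 1 ≤ M := by
    have h1 : ∫ c, g c ∂haarT ≤ ∫ _c, M ∂haarT :=
      integral_mono_ae hgint (integrable_const M) hgM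
    rw [hg1, integral_const, probReal_univ, one_smul] at h1
    exact h1
  refine ⟨hM1, ?_⟩
  have hfc := fourierCoeff_convT f hfi j
  have key := bathtub M hM1 j hj g hgint (Filter.Eventually.of_forall hg0) hgM hg1
  have habs2 : ‖fourierCoeff (fun x => (f x : ℂ)) j‖ ^ 2
      = ‖fourierCoeff (fun c => (g c : ℂ)) j‖ := by
    rw [hfc, norm_pow]
  rw [habs2]
  exact key
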